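/- Let N ≥ 3 be an integer, a > 0, β = √(1 + 4a/(N−2)²), c = (N−2)(1−β)/2, α = −(N−2)(1+β)/2; assume ν := (N−2)β is an odd positive integer. Let R > 0, k₂ = ⌊(ν+4)/4⌋, and let d̃_j = ( ∏_{ℓ=1}^{k₂} (ν − 2ℓ − 2j + 4) ) / ( ∏_{1 ≤ ℓ ≤ k₂, ℓ ≠ j} (2ℓ − 2j) ) for 1 ≤ j ≤ k₂. Then for every locally absolutely continuous f : (R,∞) → ℝ with ∫_R^∞ |f'(r) + c f(r)/r|² r^{N−1}dr < ∞, the integrals ∫_R^∞ (f(r)r^c)' r^{2i−2} dr (1 ≤ i ≤ k₂) converge absolutely and: inf_{p ∈ ℝ^{k₂}} ∫_R^∞ | (f − Σ_{i=1}^{k₂} p_i r^{α+2i−2})'(r) + (c/r)(f − Σ_{i=1}^{k₂} p_i r^{α+2i−2})(r) |² r^{N−1}dr = ∫_R^∞ |f'(r) + c f(r)/r|² r^{N−1}dr − Σ_{i,j=1}^{k₂} d̃_i d̃_j ( R^{ν−2i−2j+4} / (ν−2i−2j+4) ) ( ∫_R^∞ (f(r)r^c)' r^{2i−2} dr ) (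 ∫_R^∞ (f(r)r^c)' r^{2j−2} dr ); that is, this is the squared distance of f to span{ r^{α+2i−2} : 1 ≤ i ≤ k₂ } in the exterior homogeneous Sobolev space Ḣ¹_a(r ≥ R). -/

import Mathlib

open MeasureTheory Polynomial Finset

section Helpers

/-! ### Lagrange-interpolation sum identity -/

lemma keySum {ι : Type*} [DecidableEq ι] (s : Finset ι) (x : ι → ℝ)
    (hx : Set.InjOn x s) (t : ℝ) (ht : ∀ j ∈ s, t + x j ≠ 0)
    (A : Polynomial ℝ) (hA : A.degree < s.card) :
    ∑ j ∈ s, A.eval (x j) / ((t + x j) * ∏ ℓ ∈ s.erase j, (x j - x ℓ)) =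
      (-1) ^ (s.card - 1) * A.eval (-t) / ∏ ℓ ∈ s, (t + x ℓ) := by
  have hprod : (∏ ℓ ∈ s, (t + x ℓ)) ≠ 0 := Finset.prod_ne_zero_iff.mpr ht
  rw [eq_div_iff hprod]
  have hinterp := Lagrange.eq_interpolate hx hA
  have heval : A.eval (-t) = ∑ j ∈ s, A.eval (x j) *
      ((∏ ℓ ∈ s.erase j, (x j - x ℓ))⁻¹ * ∏ ℓ ∈ s.erase j, (-(t + x ℓ))) := by
    conv_lhs => rw [hinterp]
    rw [Lagrange.interpolate_apply, Polynomial.eval_finset_sum]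
    refine Finset.sum_congr rfl fun j hj => ?_
    rw [Polynomial.eval_mul, Polynomial.eval_C, Lagrange.basis, Polynomial.eval_prod]
    congr 1
    rw [← Finset.prod_inv_distrib, ← Finset.prod_mul_distrib]
    refine Finset.prod_congr rfl fun ℓ hℓ => ?_
    rw [Lagrange.basisDivisor, Polynomial.eval_mul, Polynomial.eval_C, Polynomial.eval_sub,
      Polynomial.eval_X, Polynomial.eval_C]
    ring
  rw [heval, Finset.mul_sum, Finset.sum_mul]
  refine Finset.sum_congr rfl fun j hj => ?_
  have hcard : (s.erase j).card = s.card - 1 := Finset.card_erase_of_mem hj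
  have hPj : (∏ ℓ ∈ s.erase j, (x j - x ℓ)) ≠ 0 := by
    refine Finset.prod_ne_zero_iff.mpr fun ℓ hℓ => sub_ne_zero.mpr ?_
    exact fun h => (Finset.mem_erase.mp hℓ).1 ((hx (Finset.mem_of_mem_erase hℓ) hj h.symm))
  have hsplit : (∏ ℓ ∈ s, (t + x ℓ)) = (t + x j) * ∏ ℓ ∈ s.erase j, (t + x ℓ) :=
    (Finset.mul_prod_erase s _ hj).symm
  have hneg : (∏ ℓ ∈ s.erase j, (-(t + x ℓ))) =
      (-1) ^ (s.card - 1) * ∏ ℓ ∈ s.erase j, (t + x ℓ) := by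
    rw [← hcard, ← Finset.prod_const (-1 : ℝ), ← Finset.prod_mul_distrib]
    exact Finset.prod_congr rfl fun ℓ _ => by ring
  have hsq : ((-1 : ℝ)) ^ (s.card - 1) * ((-1 : ℝ)) ^ (s.card - 1) = 1 := by
    rw [← pow_add]
    exact Even.neg_one_pow ⟨s.card - 1, rfl⟩
  rw [hneg, hsplit]
  rw [show ((-1 : ℝ)) ^ (s.card - 1) * (A.eval (x j) *
      ((∏ ℓ ∈ s.erase j, (x j - x ℓ))⁻¹ * ((-1) ^ (s.card - 1) * ∏ ℓ ∈ s.erase j, (t + x ℓ)))) =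
      (((-1 : ℝ)) ^ (s.card - 1) * ((-1 : ℝ)) ^ (s.card - 1)) * (A.eval (x j) *
      ((∏ ℓ ∈ s.erase j, (x j - x ℓ))⁻¹ * ∏ ℓ ∈ s.erase j, (t + x ℓ))) from by ring, hsq, one_mul]
  have h1 : t + x j ≠ 0 := ht j hj
  field_simp

/-! ### Inverse of the Cauchy-type matrix -/

lemma cauchy_inv {ι : Type*} [DecidableEq ι] (s : Finset ι) (x : ι → ℝ)
    (hx : Set.InjOn x s)
    (hpos : ∀ i ∈ s, ∀ j ∈ s, x i + x j ≠ 0)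
    (d : ι → ℝ)
    (hd : ∀ j ∈ s, d j = (∏ ℓ ∈ s, (x ℓ + x j)) / (∏ ℓ ∈ s.erase j, (x j - x ℓ)))
    {i m : ι} (hi : i ∈ s) (hm : m ∈ s) :
    ∑ j ∈ s, d j / ((x i + x j) * (x j + x m)) =
      if i = m then (∏ ℓ ∈ s.erase i, (x i - x ℓ)) / (∏ ℓ ∈ s, (x ℓ + x i)) else 0 := by
  classical
  set A : Polynomial ℝ := ∏ ℓ ∈ s.erase i, (X + C (x ℓ)) with hA
  have hAdeg : A.degree < s.card := by
    rw [hA, Polynomial.degree_prod]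
    simp only [Polynomial.degree_X_add_C]
    rw [Finset.sum_const, Finset.card_erase_of_mem hi]
    rw [nsmul_eq_mul, mul_one]
    exact_mod_cast Nat.sub_lt (Finset.card_pos.mpr ⟨i, hi⟩) one_pos
  have hAeval : ∀ y : ℝ, A.eval y = ∏ ℓ ∈ s.erase i, (y + x ℓ) := by
    intro y
    rw [hA, Polynomial.eval_prod]
    exact Finset.prod_congr rfl fun ℓ _ => by simp [add_comm]
  have hsum : ∀ j ∈ s, d j / ((x i + x j) * (x j + x m)) =
      A.eval (x j) / ((x m + x j) * ∏ ℓ ∈ s.erase j, (x j - x ℓ)) := by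
    intro j hj
    rw [hd j hj, hAeval]
    have hfac : (∏ ℓ ∈ s, (x ℓ + x j)) = (x i + x j) * ∏ ℓ ∈ s.erase i, (x j + x ℓ) := by
      rw [← Finset.mul_prod_erase s _ hi]
      exact congrArg _ (Finset.prod_congr rfl fun ℓ _ => add_comm _ _)
    rw [hfac]
    have h1 : x i + x j ≠ 0 := hpos i hi j hj
    have h2 : x m + x j ≠ 0 := hpos m hm j hj
    have hPj : (∏ ℓ ∈ s.erase j, (x j - x ℓ)) ≠ 0 := by
      refine Finset.prod_ne_zero_iff.mpr fun ℓ hℓ => sub_ne_zero.mpr ?_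
      exact fun h => (Finset.mem_erase.mp hℓ).1 ((hx (Finset.mem_of_mem_erase hℓ) hj h.symm))
    rw [add_comm (x j) (x m)]
    field_simp
  rw [Finset.sum_congr rfl hsum]
  rw [keySum s x hx (x m) (fun j hj => hpos m hm j hj) A hAdeg]
  by_cases him : i = m
  · subst him
    rw [if_pos rfl, hAeval]
    have hcard : (s.erase i).card = s.card - 1 := Finset.card_erase_of_mem hi
    have hneg : (∏ ℓ ∈ s.erase i, (-(x i) + x ℓ)) =
        (-1) ^ (s.card - 1) * ∏ ℓ ∈ s.erase i, (x i - x ℓ) := by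
      rw [← hcard, ← Finset.prod_const (-1 : ℝ), ← Finset.prod_mul_distrib]
      exact Finset.prod_congr rfl fun ℓ _ => by ring
    rw [hneg]
    have hsq : ((-1 : ℝ)) ^ (s.card - 1) * ((-1 : ℝ)) ^ (s.card - 1) = 1 := by
      rw [← pow_add]; exact Even.neg_one_pow ⟨s.card - 1, rfl⟩
    have hden : (∏ ℓ ∈ s, (x i + x ℓ)) = ∏ ℓ ∈ s, (x ℓ + x i) :=
      Finset.prod_congr rfl fun ℓ _ => add_comm _ _
    rw [hden]
    rw [show (-1 : ℝ) ^ (s.card - 1) * ((-1 : ℝ) ^ (s.card - 1) * ∏ ℓ ∈ s.erase i, (x i - x ℓ)) =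
        ((-1 : ℝ) ^ (s.card - 1) * (-1 : ℝ) ^ (s.card - 1)) * ∏ ℓ ∈ s.erase i, (x i - x ℓ)
        from by ring, hsq, one_mul]
  · rw [if_neg him, hAeval]
    have : (∏ ℓ ∈ s.erase i, (-(x m) + x ℓ)) = 0 := by
      apply Finset.prod_eq_zero (Finset.mem_erase.mpr ⟨fun h => him h.symm, hm⟩)
      ring
    rw [this]
    simp

/-! ### Integrability and expansion of squares of finite sums -/

variable {X : Type*} [MeasurableSpace X] {μ : Measure X}

lemma cross_integrable {g h : X → ℝ}
    (hgm : AEStronglyMeasurable g μ) (hhm : AEStronglyMeasurable h μ)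
    (hg : Integrable (fun r => g r ^ 2) μ) (hh : Integrable (fun r => h r ^ 2) μ) :
    Integrable (fun r => g r * h r) μ := by
  refine Integrable.mono' ((hg.add hh).div_const 2) (hgm.mul hhm)
    (Filter.Eventually.of_forall fun r => ?_)
  simp only [Pi.add_apply]
  rw [Real.norm_eq_abs, abs_mul]
  nlinarith [sq_nonneg (|g r| - |h r|), abs_nonneg (g r), abs_nonneg (h r),
    sq_abs (g r), sq_abs (h r)]

lemma sq_sum_expansion {ι : Type*} (s : Finset ι) (G : ι → X → ℝ)
    (hmeas : ∀ i ∈ s, AEStronglyMeasurable (G i) μ)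
    (hint : ∀ i ∈ s, Integrable (fun r => G i r ^ 2) μ) (q : ι → ℝ) :
    ∫ r, (∑ i ∈ s, q i * G i r) ^ 2 ∂μ =
      ∑ i ∈ s, ∑ j ∈ s, q i * q j * ∫ r, G i r * G j r ∂μ := by
  have hcross : ∀ i ∈ s, ∀ j ∈ s, Integrable (fun r => G i r * G j r) μ :=
    fun i hi j hj => cross_integrable (hmeas i hi) (hmeas j hj) (hint i hi) (hint j hj)
  have h1 : ∫ r, (∑ i ∈ s, q i * G i r) ^ 2 ∂μ =
      ∫ r, ∑ i ∈ s, ∑ j ∈ s, q i * q j * (G i r * G j r) ∂μ := by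
    refine integral_congr_ae (Filter.Eventually.of_forall fun r => ?_)
    dsimp only
    rw [sq, Finset.sum_mul_sum]
    exact Finset.sum_congr rfl fun i _ => Finset.sum_congr rfl fun j _ => by ring
  rw [h1, integral_finset_sum s fun i hi => integrable_finset_sum s fun j hj =>
    ((hcross i hi j hj).const_mul _)]
  refine Finset.sum_congr rfl fun i hi => ?_
  rw [integral_finset_sum s fun j hj => (hcross i hi j hj).const_mul _]
  exact Finset.sum_congr rfl fun j hj => integral_const_mul _ _

lemma sq_sub_sum_expansion {ι : Type*} (s : Finset ι) (G0 : X → ℝ) (G : ι → X → ℝ)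
    (hmeas0 : AEStronglyMeasurable G0 μ)
    (hint0 : Integrable (fun r => G0 r ^ 2) μ)
    (hmeas : ∀ i ∈ s, AEStronglyMeasurable (G i) μ)
    (hint : ∀ i ∈ s, Integrable (fun r => G i r ^ 2) μ) (q : ι → ℝ) :
    ∫ r, (G0 r - ∑ i ∈ s, q i * G i r) ^ 2 ∂μ =
      (∫ r, G0 r ^ 2 ∂μ) - 2 * ∑ i ∈ s, q i * ∫ r, G0 r * G i r ∂μ
        + ∑ i ∈ s, ∑ j ∈ s, q i * q j * ∫ r, G i r * G j r ∂μ := by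
  have hcross : ∀ i ∈ s, ∀ j ∈ s, Integrable (fun r => G i r * G j r) μ :=
    fun i hi j hj => cross_integrable (hmeas i hi) (hmeas j hj) (hint i hi) (hint j hj)
  have hcross0 : ∀ i ∈ s, Integrable (fun r => G0 r * G i r) μ :=
    fun i hi => cross_integrable hmeas0 (hmeas i hi) hint0 (hint i hi)
  have hsum_meas : AEStronglyMeasurable (fun r => ∑ i ∈ s, q i * G i r) μ := by
    exact Finset.aestronglyMeasurable_fun_sum s fun i hi => (hmeas i hi).const_mul _
  have hsumsq : Integrable (fun r => (∑ i ∈ s, q i * G i r) ^ 2) μ := by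
    have : (fun r => (∑ i ∈ s, q i * G i r) ^ 2) =
        (fun r => ∑ i ∈ s, ∑ j ∈ s, q i * q j * (G i r * G j r)) := by
      funext r
      rw [sq, Finset.sum_mul_sum]
      exact Finset.sum_congr rfl fun i _ => Finset.sum_congr rfl fun j _ => by ring
    rw [this]
    exact integrable_finset_sum s fun i hi => integrable_finset_sum s fun j hj =>
      (hcross i hi j hj).const_mul _
  have hmix : Integrable (fun r => G0 r * ∑ i ∈ s, q i * G i r) μ := by
    have : (fun r => G0 r * ∑ i ∈ s, q i * G i r) =
        (fun r => ∑ i ∈ s, q i * (G0 r * G i r)) := by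
      funext r; rw [Finset.mul_sum]; exact Finset.sum_congr rfl fun i _ => by ring
    rw [this]
    exact integrable_finset_sum s fun i hi => (hcross0 i hi).const_mul _
  have hexpand : (fun r => (G0 r - ∑ i ∈ s, q i * G i r) ^ 2) =
      (fun r => G0 r ^ 2 - 2 * (G0 r * ∑ i ∈ s, q i * G i r)
        + (∑ i ∈ s, q i * G i r) ^ 2) := by
    funext r; ring
  have hmix_eq : ∫ r, G0 r * ∑ i ∈ s, q i * G i r ∂μ = ∑ i ∈ s, q i * ∫ r, G0 r * G i r ∂μ := by
    rw [show (fun r => G0 r * ∑ i ∈ s, q i * G i r) =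
        (fun r => ∑ i ∈ s, q i * (G0 r * G i r)) from funext fun r => by
          rw [Finset.mul_sum]; exact Finset.sum_congr rfl fun i _ => by ring,
      integral_finset_sum s fun i hi => (hcross0 i hi).const_mul _]
    exact Finset.sum_congr rfl fun i hi => integral_const_mul _ _
  rw [hexpand, integral_add (by exact (hint0.sub ((hmix.const_mul 2))) ) hsumsq,
    integral_sub hint0 (hmix.const_mul 2), integral_const_mul, hmix_eq,
    sq_sum_expansion s G hmeas hint q]

end Helpers

/-! ### The abstract finite-dimensional minimisation -/

lemma aux_inf (s : Finset ℕ) (Q : ℝ) (lam Iv : ℕ → ℝ) (S T : ℕ → ℕ → ℝ)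
    (V : (ℕ → ℝ) → ℝ)
    (hlam : ∀ i ∈ s, lam i ≠ 0)
    (hV : ∀ p : ℕ → ℝ, V p = Q - 2 * (∑ i ∈ s, p i * (lam i * Iv i))
      + ∑ i ∈ s, ∑ j ∈ s, p i * p j * (lam i * lam j * S i j))
    (hpos : ∀ q : ℕ → ℝ, 0 ≤ ∑ i ∈ s, ∑ j ∈ s, q i * q j * (lam i * lam j * S i j))
    (hsym : ∀ i ∈ s, ∀ j ∈ s, S i j = S j i)
    (hkey : ∀ i ∈ s, ∀ m ∈ s, (∑ j ∈ s, S i j * T j m) = if i = m then 1 else 0) :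
    ⨅ p : ℕ → ℝ, V p = Q - ∑ i ∈ s, ∑ j ∈ s, T i j * Iv i * Iv j := by
  classical
  set pstar : ℕ → ℝ := fun i => (∑ j ∈ s, T i j * Iv j) / lam i with hpstar
  have hlp : ∀ i ∈ s, lam i * pstar i = ∑ j ∈ s, T i j * Iv j := by
    intro i hi
    rw [hpstar]
    simp only
    rw [mul_comm, div_mul_cancel₀ _ (hlam i hi)]
  have hH1 : ∀ i ∈ s, ∑ j ∈ s, (lam j * pstar j) * S i j = Iv i := by
    intro i hi
    have h1 : ∀ j ∈ s, (lam j * pstar j) * S i j = ∑ m ∈ s, (S i j * T j m) * Iv m := by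
      intro j hj
      rw [hlp j hj, Finset.sum_mul]
      exact Finset.sum_congr rfl fun m hm => by ring
    rw [Finset.sum_congr rfl h1, Finset.sum_comm]
    have h2 : ∀ m ∈ s, ∑ j ∈ s, (S i j * T j m) * Iv m = (if i = m then 1 else 0) * Iv m := by
      intro m hm
      rw [← Finset.sum_mul, hkey i hi m hm]
    rw [Finset.sum_congr rfl h2]
    simp [Finset.sum_ite_eq, hi, ite_mul]
  have expand : ∀ p : ℕ → ℝ,
      ∑ i ∈ s, ∑ j ∈ s, (p i - pstar i) * (p j - pstar j) * (lam i * lam j * S i j)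
      = (∑ i ∈ s, ∑ j ∈ s, p i * p j * (lam i * lam j * S i j))
        - (∑ i ∈ s, p i * (lam i * Iv i)) - (∑ i ∈ s, p i * (lam i * Iv i))
        + ∑ i ∈ s, ∑ j ∈ s, T i j * Iv i * Iv j := by
    intro p
    have h0 : ∀ i ∈ s, ∀ j ∈ s,
        (p i - pstar i) * (p j - pstar j) * (lam i * lam j * S i j)
        = p i * p j * (lam i * lam j * S i j) - p i * pstar j * (lam i * lam j * S i j)
          - pstar i * p j * (lam i * lam j * S i j)
          + pstar i * pstar j * (lam i * lam j * S i j) := fun i _ j _ => by ring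
    have hS2 : ∑ i ∈ s, ∑ j ∈ s, p i * pstar j * (lam i * lam j * S i j)
        = ∑ i ∈ s, p i * (lam i * Iv i) := by
      refine Finset.sum_congr rfl fun i hi => ?_
      have : ∀ j ∈ s, p i * pstar j * (lam i * lam j * S i j)
          = (p i * lam i) * ((lam j * pstar j) * S i j) := fun j _ => by ring
      rw [Finset.sum_congr rfl this, ← Finset.mul_sum, hH1 i hi]
      ring
    have hS3 : ∑ i ∈ s, ∑ j ∈ s, pstar i * p j * (lam i * lam j * S i j)
        = ∑ i ∈ s, p i * (lam i * Iv i) := by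
      rw [Finset.sum_comm]
      refine Finset.sum_congr rfl fun j hj => ?_
      have : ∀ i ∈ s, pstar i * p j * (lam i * lam j * S i j)
          = (p j * lam j) * ((lam i * pstar i) * S j i) := by
        intro i hi
        rw [hsym i hi j hj]
        ring
      rw [Finset.sum_congr rfl this, ← Finset.mul_sum, hH1 j hj]
      ring
    have hS4 : ∑ i ∈ s, ∑ j ∈ s, pstar i * pstar j * (lam i * lam j * S i j)
        = ∑ i ∈ s, ∑ j ∈ s, T i j * Iv i * Iv j := by
      refine Finset.sum_congr rfl fun i hi => ?_
      have : ∀ j ∈ s, pstar i * pstar j * (lam i * lam j * S i j)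
          = (lam i * pstar i) * ((lam j * pstar j) * S i j) := fun j _ => by ring
      rw [Finset.sum_congr rfl this, ← Finset.mul_sum, hH1 i hi, hlp i hi, Finset.sum_mul]
      exact Finset.sum_congr rfl fun j hj => by ring
    calc ∑ i ∈ s, ∑ j ∈ s, (p i - pstar i) * (p j - pstar j) * (lam i * lam j * S i j)
        = ∑ i ∈ s, ∑ j ∈ s, (p i * p j * (lam i * lam j * S i j)
            - p i * pstar j * (lam i * lam j * S i j)
            - pstar i * p j * (lam i * lam j * S i j)
            + pstar i * pstar j * (lam i * lam j * S i j)) := by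
          exact Finset.sum_congr rfl fun i hi => Finset.sum_congr rfl fun j hj => h0 i hi j hj
      _ = (∑ i ∈ s, ∑ j ∈ s, p i * p j * (lam i * lam j * S i j))
            - (∑ i ∈ s, ∑ j ∈ s, p i * pstar j * (lam i * lam j * S i j))
            - (∑ i ∈ s, ∑ j ∈ s, pstar i * p j * (lam i * lam j * S i j))
            + ∑ i ∈ s, ∑ j ∈ s, pstar i * pstar j * (lam i * lam j * S i j) := by
          simp only [Finset.sum_add_distrib, Finset.sum_sub_distrib]
      _ = _ := by rw [hS2, hS3, hS4]
  have hM : ∀ p : ℕ → ℝ, V p = (Q - ∑ i ∈ s, ∑ j ∈ s, T i j * Iv i * Iv j)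
      + ∑ i ∈ s, ∑ j ∈ s, (p i - pstar i) * (p j - pstar j) * (lam i * lam j * S i j) := by
    intro p
    rw [hV p, expand p]
    ring
  have hge : ∀ p : ℕ → ℝ, (Q - ∑ i ∈ s, ∑ j ∈ s, T i j * Iv i * Iv j) ≤ V p := by
    intro p
    rw [hM p]
    have := hpos fun i => p i - pstar i
    linarith
  have heq : V pstar = Q - ∑ i ∈ s, ∑ j ∈ s, T i j * Iv i * Iv j := by
    rw [hM pstar]
    simp
  refine le_antisymm ((ciInf_le ⟨Q - ∑ i ∈ s, ∑ j ∈ s, T i j * Iv i * Iv j, ?_⟩ pstar).trans_eq heq)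
    (le_ciInf hge)
  rintro x ⟨p, rfl⟩
  exact hge p

open MeasureTheory

/-- Explicit formula for the squared `Ḣ¹_a(r ≥ R)` distance of `f` to the span
of the powers `r^{α+2i-2}`, `1 ≤ i ≤ k₂`, via the inverse Cauchy matrix
coefficients `d̃_j`. -/
theorem projection_formula_H1_component
    (N : ℕ) (hN : 3 ≤ N) (a : ℝ) (ha : 0 < a)
    (β c α : ℝ)
    (hβ : β = Real.sqrt (1 + 4 * a / ((N : ℝ) - 2) ^ 2))
    (hc : c = ((N : ℝ) - 2) * (1 - β) / 2)
    (hα : α = -(((N : ℝ) - 2) * (1 + β)) / 2)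
    (ν : ℕ) (hνodd : Odd ν) (hνpos : 0 < ν) (hνβ : ((N : ℝ) - 2) * β = (ν : ℝ))
    (R : ℝ) (hR : 0 < R)
    (k₂ : ℕ) (hk₂ : k₂ = (ν + 4) / 4)
    (dtil : ℕ → ℝ)
    (hdtil : ∀ j : ℕ, dtil j =
      (∏ ℓ ∈ Finset.Icc 1 k₂, ((ν : ℝ) - 2 * (ℓ : ℝ) - 2 * (j : ℝ) + 4)) /
        (∏ ℓ ∈ (Finset.Icc 1 k₂).erase j, (2 * (ℓ : ℝ) - 2 * (j : ℝ))))
    (f : ℝ → ℝ)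
    (hdiff : ∀ r ∈ Set.Ioi R, DifferentiableAt ℝ f r)
    (hfH1 : IntegrableOn
      (fun r => (deriv f r + c * f r / r) ^ 2 * r ^ ((N : ℝ) - 1)) (Set.Ioi R)) :
    (∀ i ∈ Finset.Icc 1 k₂,
      IntegrableOn
        (fun r => deriv (fun s => f s * s ^ c) r * r ^ (2 * (i : ℝ) - 2))
        (Set.Ioi R)) ∧
    (⨅ p : ℕ → ℝ, ∫ r in Set.Ioi R,
        (deriv (fun s => f s - ∑ i ∈ Finset.Icc 1 k₂, p i * s ^ (α + 2 * (i : ℝ) - 2)) r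
          + (c / r) *
            (f r - ∑ i ∈ Finset.Icc 1 k₂, p i * r ^ (α + 2 * (i : ℝ) - 2))) ^ 2 *
          r ^ ((N : ℝ) - 1))
      = (∫ r in Set.Ioi R, (deriv f r + c * f r / r) ^ 2 * r ^ ((N : ℝ) - 1))
        - ∑ i ∈ Finset.Icc 1 k₂, ∑ j ∈ Finset.Icc 1 k₂,
            dtil i * dtil j *
              (R ^ ((ν : ℝ) - 2 * (i : ℝ) - 2 * (j : ℝ) + 4) /
                ((ν : ℝ) - 2 * (i : ℝ) - 2 * (j : ℝ) + 4)) *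
              (∫ r in Set.Ioi R, deriv (fun s => f s * s ^ c) r * r ^ (2 * (i : ℝ) - 2)) *
              (∫ r in Set.Ioi R, deriv (fun s => f s * s ^ c) r * r ^ (2 * (j : ℝ) - 2)) := by
  classical
  have hν2 : ν % 2 = 1 := Nat.odd_iff.mp hνodd
  have hk1 : 1 ≤ k₂ := by omega
  have hk4 : 4 * k₂ ≤ ν + 3 := by omega
  have hcα : c + α = -(ν : ℝ) := by
    have h : c + α = -(((N : ℝ) - 2) * β) := by rw [hc, hα]; ring
    rw [h, hνβ]
  have hαc : α - c = -((N : ℝ) - 2) := by rw [hc, hα]; ring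
  have h2c : 2 * c = ((N : ℝ) - 2) - (ν : ℝ) := by
    have h : 2 * c = ((N : ℝ) - 2) - ((N : ℝ) - 2) * β := by rw [hc]; ring
    rw [h, hνβ]
  have h2α : 2 * α = -((N : ℝ) - 2) - (ν : ℝ) := by
    have h : 2 * α = -((N : ℝ) - 2) - ((N : ℝ) - 2) * β := by rw [hα]; ring
    rw [h, hνβ]
  have hbound : ∀ i ∈ Finset.Icc 1 k₂, (4 * (i : ℝ) ≤ (ν : ℝ) + 3) := by
    intro i hi
    have h1 : i ≤ k₂ := (Finset.mem_Icc.mp hi).2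
    have h2 : (4 * i : ℕ) ≤ ν + 3 := by omega
    exact_mod_cast h2
  have hXpos : ∀ i ∈ Finset.Icc 1 k₂, ∀ j ∈ Finset.Icc 1 k₂,
      (1 : ℝ) ≤ (ν : ℝ) - 2 * (i : ℝ) - 2 * (j : ℝ) + 4 := by
    intro i hi j hj
    have h1 : i ≤ k₂ := (Finset.mem_Icc.mp hi).2
    have h2 : j ≤ k₂ := (Finset.mem_Icc.mp hj).2
    have h3 : (2 * i + 2 * j : ℕ) ≤ ν + 3 := by omega
    have h4 : (2 * (i : ℝ) + 2 * (j : ℝ)) ≤ (ν : ℝ) + 3 := by exact_mod_cast h3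
    linarith
  -- measurability
  have hfm : AEMeasurable f (volume.restrict (Set.Ioi R)) :=
    ContinuousOn.aemeasurable
      (fun r hr => (hdiff r hr).continuousAt.continuousWithinAt) measurableSet_Ioi
  have hum : AEStronglyMeasurable (fun r => deriv f r + c * f r / r)
      (volume.restrict (Set.Ioi R)) :=
    ((measurable_deriv f).aemeasurable.add
      ((aemeasurable_const.mul hfm).div aemeasurable_id)).aestronglyMeasurable
  have hrpm : ∀ e : ℝ, AEStronglyMeasurable (fun r : ℝ => r ^ e)
      (volume.restrict (Set.Ioi R)) := by
    intro e
    refine (ContinuousOn.aemeasurable ?_ measurableSet_Ioi).aestronglyMeasurable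
    exact ContinuousOn.rpow_const (continuous_id.continuousOn)
      (fun x hx => Or.inl (hR.trans hx).ne')
  have hG0m : AEStronglyMeasurable
      (fun r : ℝ => (deriv f r + c * f r / r) * r ^ (((N : ℝ) - 1) / 2))
      (volume.restrict (Set.Ioi R)) := hum.mul (hrpm _)
  have hGm : ∀ i : ℕ, AEStronglyMeasurable
      (fun r : ℝ => (2 * (i : ℝ) - 2 - (ν : ℝ)) * r ^ (α + 2 * (i : ℝ) - 3 + ((N : ℝ) - 1) / 2))
      (volume.restrict (Set.Ioi R)) := fun i => (hrpm _).const_mul _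
  have hsq_rpow : ∀ (e : ℝ) (r : ℝ), r ∈ Set.Ioi R → (r ^ e) ^ 2 = r ^ (2 * e) := by
    intro e r hr
    rw [sq, ← Real.rpow_add (hR.trans hr)]
    congr 1
    ring
  have hG0eq : ∀ r ∈ Set.Ioi R, (deriv f r + c * f r / r) ^ 2 * r ^ ((N : ℝ) - 1)
      = ((deriv f r + c * f r / r) * r ^ (((N : ℝ) - 1) / 2)) ^ 2 := by
    intro r hr
    rw [mul_pow, hsq_rpow _ r hr, show 2 * (((N : ℝ) - 1) / 2) = (N : ℝ) - 1 from by ring]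
  have hG0sq : IntegrableOn
      (fun r : ℝ => ((deriv f r + c * f r / r) * r ^ (((N : ℝ) - 1) / 2)) ^ 2)
      (Set.Ioi R) :=
    hfH1.congr_fun (fun r hr => hG0eq r hr) measurableSet_Ioi
  have hGsq : ∀ i ∈ Finset.Icc 1 k₂, IntegrableOn
      (fun r : ℝ => ((2 * (i : ℝ) - 2 - (ν : ℝ)) *
        r ^ (α + 2 * (i : ℝ) - 3 + ((N : ℝ) - 1) / 2)) ^ 2) (Set.Ioi R) := by
    intro i hi
    have he : (4 * (i : ℝ) - 5 - (ν : ℝ)) < -1 := by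
      have := hbound i hi; linarith
    have hbase : IntegrableOn (fun t : ℝ => t ^ (4 * (i : ℝ) - 5 - (ν : ℝ))) (Set.Ioi R) :=
      integrableOn_Ioi_rpow_of_lt he hR
    refine IntegrableOn.congr_fun (hbase.const_mul ((2 * (i : ℝ) - 2 - (ν : ℝ)) ^ 2))
      ?_ measurableSet_Ioi
    intro r hr
    dsimp only
    rw [mul_pow, hsq_rpow _ r hr]
    congr 2
    linarith [h2α]
  have P1 : ∀ r ∈ Set.Ioi R, deriv (fun s => f s * s ^ c) r
      = (deriv f r + c * f r / r) * r ^ c := by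
    intro r hr
    have hrpos : (0 : ℝ) < r := hR.trans hr
    have h1 : HasDerivAt (fun s : ℝ => s ^ c) (c * r ^ (c - 1)) r :=
      Real.hasDerivAt_rpow_const (Or.inl hrpos.ne')
    have h2 : HasDerivAt f (deriv f r) r := (hdiff r hr).hasDerivAt
    rw [(h2.fun_mul h1).deriv, Real.rpow_sub hrpos c 1, Real.rpow_one]
    field_simp
  have hIeq : ∀ i : ℕ, ∀ r ∈ Set.Ioi R,
      ((deriv f r + c * f r / r) * r ^ (((N : ℝ) - 1) / 2)) *
        r ^ (c + 2 * (i : ℝ) - 2 - ((N : ℝ) - 1) / 2)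
      = deriv (fun s => f s * s ^ c) r * r ^ (2 * (i : ℝ) - 2) := by
    intro i r hr
    have hrpos : (0 : ℝ) < r := hR.trans hr
    rw [P1 r hr, mul_assoc, mul_assoc, ← Real.rpow_add hrpos, ← Real.rpow_add hrpos]
    congr 2
    ring
  have hIvsq : ∀ i ∈ Finset.Icc 1 k₂, IntegrableOn
      (fun r : ℝ => (r ^ (c + 2 * (i : ℝ) - 2 - ((N : ℝ) - 1) / 2)) ^ 2) (Set.Ioi R) := by
    intro i hi
    have he : (4 * (i : ℝ) - 5 - (ν : ℝ)) < -1 := by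
      have := hbound i hi; linarith
    refine IntegrableOn.congr_fun (integrableOn_Ioi_rpow_of_lt he hR) ?_ measurableSet_Ioi
    intro r hr
    dsimp only
    rw [hsq_rpow _ r hr]
    congr 1
    linarith [h2c]
  have hIint : ∀ i ∈ Finset.Icc 1 k₂, IntegrableOn
      (fun r => deriv (fun s => f s * s ^ c) r * r ^ (2 * (i : ℝ) - 2)) (Set.Ioi R) := by
    intro i hi
    have h := cross_integrable hG0m (hrpm (c + 2 * (i : ℝ) - 2 - ((N : ℝ) - 1) / 2))
      hG0sq (hIvsq i hi)
    exact IntegrableOn.congr_fun h (fun r hr => hIeq i r hr) measurableSet_Ioi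
  have hJ0i : ∀ i ∈ Finset.Icc 1 k₂,
      (∫ r in Set.Ioi R, ((deriv f r + c * f r / r) * r ^ (((N : ℝ) - 1) / 2)) *
        ((2 * (i : ℝ) - 2 - (ν : ℝ)) * r ^ (α + 2 * (i : ℝ) - 3 + ((N : ℝ) - 1) / 2)))
      = (2 * (i : ℝ) - 2 - (ν : ℝ)) *
        ∫ r in Set.Ioi R, deriv (fun s => f s * s ^ c) r * r ^ (2 * (i : ℝ) - 2) := by
    intro i hi
    rw [← integral_const_mul]
    refine setIntegral_congr_fun measurableSet_Ioi fun r hr => ?_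
    rw [← hIeq i r hr,
      show α + 2 * (i : ℝ) - 3 + ((N : ℝ) - 1) / 2
        = c + 2 * (i : ℝ) - 2 - ((N : ℝ) - 1) / 2 from by linarith [hαc]]
    ring
  have hJij : ∀ i ∈ Finset.Icc 1 k₂, ∀ j ∈ Finset.Icc 1 k₂,
      (∫ r in Set.Ioi R,
        ((2 * (i : ℝ) - 2 - (ν : ℝ)) * r ^ (α + 2 * (i : ℝ) - 3 + ((N : ℝ) - 1) / 2)) *
        ((2 * (j : ℝ) - 2 - (ν : ℝ)) * r ^ (α + 2 * (j : ℝ) - 3 + ((N : ℝ) - 1) / 2)))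
      = (2 * (i : ℝ) - 2 - (ν : ℝ)) * (2 * (j : ℝ) - 2 - (ν : ℝ)) *
        (R ^ (2 * (i : ℝ) + 2 * (j : ℝ) - 4 - (ν : ℝ)) /
          ((ν : ℝ) - 2 * (i : ℝ) - 2 * (j : ℝ) + 4)) := by
    intro i hi j hj
    have hX := hXpos i hi j hj
    have he : (2 * (i : ℝ) + 2 * (j : ℝ) - 5 - (ν : ℝ)) < -1 := by linarith
    have h1 : ∀ r ∈ Set.Ioi R,
        ((2 * (i : ℝ) - 2 - (ν : ℝ)) * r ^ (α + 2 * (i : ℝ) - 3 + ((N : ℝ) - 1) / 2)) *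
        ((2 * (j : ℝ) - 2 - (ν : ℝ)) * r ^ (α + 2 * (j : ℝ) - 3 + ((N : ℝ) - 1) / 2))
        = ((2 * (i : ℝ) - 2 - (ν : ℝ)) * (2 * (j : ℝ) - 2 - (ν : ℝ))) *
          r ^ (2 * (i : ℝ) + 2 * (j : ℝ) - 5 - (ν : ℝ)) := by
      intro r hr
      rw [mul_mul_mul_comm, ← Real.rpow_add (hR.trans hr),
        show α + 2 * (i : ℝ) - 3 + ((N : ℝ) - 1) / 2 + (α + 2 * (j : ℝ) - 3 + ((N : ℝ) - 1) / 2)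
          = 2 * (i : ℝ) + 2 * (j : ℝ) - 5 - (ν : ℝ) from by linarith [h2α]]
    rw [setIntegral_congr_fun measurableSet_Ioi h1, integral_const_mul,
      integral_Ioi_rpow_of_lt he hR,
      show (2 * (i : ℝ) + 2 * (j : ℝ) - 5 - (ν : ℝ)) + 1
        = 2 * (i : ℝ) + 2 * (j : ℝ) - 4 - (ν : ℝ) from by ring,
      show -R ^ (2 * (i : ℝ) + 2 * (j : ℝ) - 4 - (ν : ℝ)) /
          (2 * (i : ℝ) + 2 * (j : ℝ) - 4 - (ν : ℝ))
        = R ^ (2 * (i : ℝ) + 2 * (j : ℝ) - 4 - (ν : ℝ)) /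
          ((ν : ℝ) - 2 * (i : ℝ) - 2 * (j : ℝ) + 4) from by
        rw [div_eq_div_iff (ne_of_lt (by linarith)) (ne_of_gt (by linarith))]
        ring]
  have hQeq : (∫ r in Set.Ioi R,
        ((deriv f r + c * f r / r) * r ^ (((N : ℝ) - 1) / 2)) ^ 2)
      = ∫ r in Set.Ioi R, (deriv f r + c * f r / r) ^ 2 * r ^ ((N : ℝ) - 1) :=
    setIntegral_congr_fun measurableSet_Ioi fun r hr => (hG0eq r hr).symm
  have hVexp : ∀ p : ℕ → ℝ,
      (∫ r in Set.Ioi R,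
        (deriv (fun s => f s - ∑ i ∈ Finset.Icc 1 k₂, p i * s ^ (α + 2 * (i : ℝ) - 2)) r
          + (c / r) *
            (f r - ∑ i ∈ Finset.Icc 1 k₂, p i * r ^ (α + 2 * (i : ℝ) - 2))) ^ 2 *
          r ^ ((N : ℝ) - 1))
      = ∫ r in Set.Ioi R, ((deriv f r + c * f r / r) * r ^ (((N : ℝ) - 1) / 2)
          - ∑ i ∈ Finset.Icc 1 k₂, p i *
            ((2 * (i : ℝ) - 2 - (ν : ℝ)) * r ^ (α + 2 * (i : ℝ) - 3 + ((N : ℝ) - 1) / 2))) ^ 2 := by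
    intro p
    refine setIntegral_congr_fun measurableSet_Ioi fun r hr => ?_
    have hrpos : (0 : ℝ) < r := hR.trans hr
    have hders : HasDerivAt (fun y : ℝ => ∑ i ∈ Finset.Icc 1 k₂, p i * y ^ (α + 2 * (i : ℝ) - 2))
        (∑ i ∈ Finset.Icc 1 k₂, p i * ((α + 2 * (i : ℝ) - 2) * r ^ (α + 2 * (i : ℝ) - 3))) r := by
      refine HasDerivAt.fun_sum fun i hi => ?_
      have h := (Real.hasDerivAt_rpow_const (x := r) (p := α + 2 * (i : ℝ) - 2)
        (Or.inl hrpos.ne')).const_mul (p i)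
      rwa [show α + 2 * (i : ℝ) - 2 - 1 = α + 2 * (i : ℝ) - 3 from by ring] at h
    have hder : deriv (fun s => f s - ∑ i ∈ Finset.Icc 1 k₂, p i * s ^ (α + 2 * (i : ℝ) - 2)) r
        = deriv f r - ∑ i ∈ Finset.Icc 1 k₂, p i * ((α + 2 * (i : ℝ) - 2) *
            r ^ (α + 2 * (i : ℝ) - 3)) :=
      ((hdiff r hr).hasDerivAt.sub hders).deriv
    rw [hder]
    have hterm : ∀ i ∈ Finset.Icc 1 k₂,
        (p i * ((α + 2 * (i : ℝ) - 2) * r ^ (α + 2 * (i : ℝ) - 3))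
          + (c / r) * (p i * r ^ (α + 2 * (i : ℝ) - 2))) * r ^ (((N : ℝ) - 1) / 2)
        = p i * ((2 * (i : ℝ) - 2 - (ν : ℝ)) * r ^ (α + 2 * (i : ℝ) - 3 + ((N : ℝ) - 1) / 2)) := by
      intro i hi
      have hd : r ^ (α + 2 * (i : ℝ) - 2) / r = r ^ (α + 2 * (i : ℝ) - 3) := by
        rw [show α + 2 * (i : ℝ) - 3 = (α + 2 * (i : ℝ) - 2) - 1 from by ring,
          Real.rpow_sub hrpos (α + 2 * (i : ℝ) - 2) 1, Real.rpow_one]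
      have hm : r ^ (α + 2 * (i : ℝ) - 3) * r ^ (((N : ℝ) - 1) / 2)
          = r ^ (α + 2 * (i : ℝ) - 3 + ((N : ℝ) - 1) / 2) := (Real.rpow_add hrpos _ _).symm
      calc (p i * ((α + 2 * (i : ℝ) - 2) * r ^ (α + 2 * (i : ℝ) - 3))
            + (c / r) * (p i * r ^ (α + 2 * (i : ℝ) - 2))) * r ^ (((N : ℝ) - 1) / 2)
          = p i * ((α + 2 * (i : ℝ) - 2) *
              (r ^ (α + 2 * (i : ℝ) - 3) * r ^ (((N : ℝ) - 1) / 2))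
            + c * (r ^ (α + 2 * (i : ℝ) - 2) / r * r ^ (((N : ℝ) - 1) / 2))) := by ring
        _ = p i * ((α + 2 * (i : ℝ) - 2) * r ^ (α + 2 * (i : ℝ) - 3 + ((N : ℝ) - 1) / 2)
            + c * r ^ (α + 2 * (i : ℝ) - 3 + ((N : ℝ) - 1) / 2)) := by rw [hd, hm]
        _ = p i * ((α + c + 2 * (i : ℝ) - 2) *
              r ^ (α + 2 * (i : ℝ) - 3 + ((N : ℝ) - 1) / 2)) := by ring
        _ = _ := by
            rw [show α + c + 2 * (i : ℝ) - 2 = 2 * (i : ℝ) - 2 - (ν : ℝ) from by linarith [hcα]]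
    have hsplit : ∑ i ∈ Finset.Icc 1 k₂,
        (p i * ((α + 2 * (i : ℝ) - 2) * r ^ (α + 2 * (i : ℝ) - 3))
          + (c / r) * (p i * r ^ (α + 2 * (i : ℝ) - 2))) * r ^ (((N : ℝ) - 1) / 2)
        = (∑ i ∈ Finset.Icc 1 k₂, p i * ((α + 2 * (i : ℝ) - 2) * r ^ (α + 2 * (i : ℝ) - 3)))
            * r ^ (((N : ℝ) - 1) / 2)
          + (c / r) * (∑ i ∈ Finset.Icc 1 k₂, p i * r ^ (α + 2 * (i : ℝ) - 2))
            * r ^ (((N : ℝ) - 1) / 2) := by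
      rw [Finset.sum_mul, Finset.mul_sum, Finset.sum_mul, ← Finset.sum_add_distrib]
      refine Finset.sum_congr rfl fun i _ => by ring
    have hinner : (deriv f r - ∑ i ∈ Finset.Icc 1 k₂,
          p i * ((α + 2 * (i : ℝ) - 2) * r ^ (α + 2 * (i : ℝ) - 3))
        + (c / r) * (f r - ∑ i ∈ Finset.Icc 1 k₂, p i * r ^ (α + 2 * (i : ℝ) - 2))) *
          r ^ (((N : ℝ) - 1) / 2)
        = (deriv f r + c * f r / r) * r ^ (((N : ℝ) - 1) / 2)
          - ∑ i ∈ Finset.Icc 1 k₂, p i *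
            ((2 * (i : ℝ) - 2 - (ν : ℝ)) * r ^ (α + 2 * (i : ℝ) - 3 + ((N : ℝ) - 1) / 2)) := by
      rw [← Finset.sum_congr rfl hterm, hsplit]
      ring
    rw [show ∀ X : ℝ, X ^ 2 * r ^ ((N : ℝ) - 1) = (X * r ^ (((N : ℝ) - 1) / 2)) ^ 2 from
      fun X => by
        rw [mul_pow, hsq_rpow _ r hr, show 2 * (((N : ℝ) - 1) / 2) = (N : ℝ) - 1 from by ring],
      hinner]
  have hlam : ∀ i ∈ Finset.Icc 1 k₂, (2 * (i : ℝ) - 2 - (ν : ℝ)) ≠ 0 := by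
    intro i hi h
    have h1 : 1 ≤ i := (Finset.mem_Icc.mp hi).1
    have h2 : ((ν : ℝ)) + 2 = 2 * (i : ℝ) := by linarith
    have h3 : (ν + 2 : ℕ) = 2 * i := by exact_mod_cast h2
    omega
  have hsymS : ∀ i ∈ Finset.Icc 1 k₂, ∀ j ∈ Finset.Icc 1 k₂,
      R ^ (2 * (i : ℝ) + 2 * (j : ℝ) - 4 - (ν : ℝ)) / ((ν : ℝ) - 2 * (i : ℝ) - 2 * (j : ℝ) + 4)
      = R ^ (2 * (j : ℝ) + 2 * (i : ℝ) - 4 - (ν : ℝ)) /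
          ((ν : ℝ) - 2 * (j : ℝ) - 2 * (i : ℝ) + 4) := by
    intro i _ j _
    rw [show 2 * (j : ℝ) + 2 * (i : ℝ) - 4 - (ν : ℝ)
        = 2 * (i : ℝ) + 2 * (j : ℝ) - 4 - (ν : ℝ) from by ring,
      show (ν : ℝ) - 2 * (j : ℝ) - 2 * (i : ℝ) + 4
        = (ν : ℝ) - 2 * (i : ℝ) - 2 * (j : ℝ) + 4 from by ring]
  have hposq : ∀ q : ℕ → ℝ, 0 ≤ ∑ i ∈ Finset.Icc 1 k₂, ∑ j ∈ Finset.Icc 1 k₂,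
      q i * q j * ((2 * (i : ℝ) - 2 - (ν : ℝ)) * (2 * (j : ℝ) - 2 - (ν : ℝ)) *
        (R ^ (2 * (i : ℝ) + 2 * (j : ℝ) - 4 - (ν : ℝ)) /
          ((ν : ℝ) - 2 * (i : ℝ) - 2 * (j : ℝ) + 4))) := by
    intro q
    have h := sq_sum_expansion (μ := volume.restrict (Set.Ioi R)) (Finset.Icc 1 k₂)
      (fun i r => (2 * (i : ℝ) - 2 - (ν : ℝ)) * r ^ (α + 2 * (i : ℝ) - 3 + ((N : ℝ) - 1) / 2))
      (fun i _ => hGm i) (fun i hi => hGsq i hi) q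
    calc (0 : ℝ) ≤ ∫ r in Set.Ioi R, (∑ i ∈ Finset.Icc 1 k₂, q i *
          ((2 * (i : ℝ) - 2 - (ν : ℝ)) * r ^ (α + 2 * (i : ℝ) - 3 + ((N : ℝ) - 1) / 2))) ^ 2 :=
        integral_nonneg fun r => sq_nonneg _
      _ = ∑ i ∈ Finset.Icc 1 k₂, ∑ j ∈ Finset.Icc 1 k₂, q i * q j *
          ∫ r in Set.Ioi R,
            ((2 * (i : ℝ) - 2 - (ν : ℝ)) * r ^ (α + 2 * (i : ℝ) - 3 + ((N : ℝ) - 1) / 2)) *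
            ((2 * (j : ℝ) - 2 - (ν : ℝ)) * r ^ (α + 2 * (j : ℝ) - 3 + ((N : ℝ) - 1) / 2)) := h
      _ = _ := Finset.sum_congr rfl fun i hi => Finset.sum_congr rfl fun j hj => by
          rw [hJij i hi j hj]
  have hVfull : ∀ p : ℕ → ℝ,
      (∫ r in Set.Ioi R,
        (deriv (fun s => f s - ∑ i ∈ Finset.Icc 1 k₂, p i * s ^ (α + 2 * (i : ℝ) - 2)) r
          + (c / r) *
            (f r - ∑ i ∈ Finset.Icc 1 k₂, p i * r ^ (α + 2 * (i : ℝ) - 2))) ^ 2 *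
          r ^ ((N : ℝ) - 1))
      = (∫ r in Set.Ioi R, (deriv f r + c * f r / r) ^ 2 * r ^ ((N : ℝ) - 1))
        - 2 * (∑ i ∈ Finset.Icc 1 k₂, p i * ((2 * (i : ℝ) - 2 - (ν : ℝ)) *
            ∫ r in Set.Ioi R, deriv (fun s => f s * s ^ c) r * r ^ (2 * (i : ℝ) - 2)))
        + ∑ i ∈ Finset.Icc 1 k₂, ∑ j ∈ Finset.Icc 1 k₂, p i * p j *
            ((2 * (i : ℝ) - 2 - (ν : ℝ)) * (2 * (j : ℝ) - 2 - (ν : ℝ)) *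
              (R ^ (2 * (i : ℝ) + 2 * (j : ℝ) - 4 - (ν : ℝ)) /
                ((ν : ℝ) - 2 * (i : ℝ) - 2 * (j : ℝ) + 4))) := by
    intro p
    rw [hVexp p,
      sq_sub_sum_expansion (μ := volume.restrict (Set.Ioi R)) (Finset.Icc 1 k₂)
        (fun r => (deriv f r + c * f r / r) * r ^ (((N : ℝ) - 1) / 2))
        (fun i r => (2 * (i : ℝ) - 2 - (ν : ℝ)) * r ^ (α + 2 * (i : ℝ) - 3 + ((N : ℝ) - 1) / 2))
        hG0m hG0sq (fun i _ => hGm i) (fun i hi => hGsq i hi) p,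
      hQeq]
    congr 1
    · congr 1
      congr 1
      exact Finset.sum_congr rfl fun i hi => by rw [hJ0i i hi]
    · exact Finset.sum_congr rfl fun i hi => Finset.sum_congr rfl fun j hj => by
        rw [hJij i hi j hj]
  have hkey : ∀ i ∈ Finset.Icc 1 k₂, ∀ m ∈ Finset.Icc 1 k₂,
      (∑ j ∈ Finset.Icc 1 k₂,
        (R ^ (2 * (i : ℝ) + 2 * (j : ℝ) - 4 - (ν : ℝ)) /
          ((ν : ℝ) - 2 * (i : ℝ) - 2 * (j : ℝ) + 4)) *
        (dtil j * dtil m * (R ^ ((ν : ℝ) - 2 * (j : ℝ) - 2 * (m : ℝ) + 4) /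
          ((ν : ℝ) - 2 * (j : ℝ) - 2 * (m : ℝ) + 4))))
      = if i = m then 1 else 0 := by
    intro i hi m hm
    set x : ℕ → ℝ := fun n => (ν : ℝ) / 2 + 2 - 2 * (n : ℝ) with hx
    have hxadd : ∀ a b : ℕ, x a + x b = (ν : ℝ) - 2 * (a : ℝ) - 2 * (b : ℝ) + 4 := by
      intro a b
      rw [hx]
      ring
    have hinj : Set.InjOn x (Finset.Icc 1 k₂) := by
      intro a _ b _ hab
      have h1 : (a : ℝ) = b := by
        rw [hx] at hab
        simp only at hab
        linarith
      exact_mod_cast h1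
    have hne : ∀ a ∈ Finset.Icc 1 k₂, ∀ b ∈ Finset.Icc 1 k₂, x a + x b ≠ 0 := by
      intro a ha b hb
      rw [hxadd]
      have := hXpos a ha b hb
      exact ne_of_gt (by linarith)
    have hd : ∀ j ∈ Finset.Icc 1 k₂, dtil j =
        (∏ ℓ ∈ Finset.Icc 1 k₂, (x ℓ + x j)) /
          (∏ ℓ ∈ (Finset.Icc 1 k₂).erase j, (x j - x ℓ)) := by
      intro j _
      rw [hdtil j]
      congr 1
      · exact Finset.prod_congr rfl fun ℓ _ => (hxadd ℓ j).symm
      · refine Finset.prod_congr rfl fun ℓ _ => ?_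
        rw [hx]
        ring
    have hcinv := cauchy_inv (Finset.Icc 1 k₂) x hinj hne dtil hd hi hm
    have hterm : ∀ j ∈ Finset.Icc 1 k₂,
        (R ^ (2 * (i : ℝ) + 2 * (j : ℝ) - 4 - (ν : ℝ)) /
          ((ν : ℝ) - 2 * (i : ℝ) - 2 * (j : ℝ) + 4)) *
        (dtil j * dtil m * (R ^ ((ν : ℝ) - 2 * (j : ℝ) - 2 * (m : ℝ) + 4) /
          ((ν : ℝ) - 2 * (j : ℝ) - 2 * (m : ℝ) + 4)))
        = (dtil m * R ^ (2 * (i : ℝ) - 2 * (m : ℝ))) *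
            (dtil j / ((x i + x j) * (x j + x m))) := by
      intro j hj
      have h1 : R ^ (2 * (i : ℝ) + 2 * (j : ℝ) - 4 - (ν : ℝ)) *
          R ^ ((ν : ℝ) - 2 * (j : ℝ) - 2 * (m : ℝ) + 4) = R ^ (2 * (i : ℝ) - 2 * (m : ℝ)) := by
        rw [← Real.rpow_add hR]
        congr 1
        ring
      rw [show (ν : ℝ) - 2 * (i : ℝ) - 2 * (j : ℝ) + 4 = x i + x j from (hxadd i j).symm,
        show (ν : ℝ) - 2 * (j : ℝ) - 2 * (m : ℝ) + 4 = x j + x m from (hxadd j m).symm,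
        ← h1]
      have hnij : x i + x j ≠ 0 := hne i hi j hj
      have hnjm : x j + x m ≠ 0 := hne j hj m hm
      field_simp
      simp only [hx]
      ring_nf
    rw [Finset.sum_congr rfl hterm, ← Finset.mul_sum, hcinv]
    by_cases him : i = m
    · subst him
      rw [if_pos rfl, if_pos rfl,
        show (2 * (i : ℝ) - 2 * (i : ℝ)) = 0 from by ring, Real.rpow_zero, mul_one,
        hd i hi]
      have hnum : (∏ ℓ ∈ Finset.Icc 1 k₂, (x ℓ + x i)) ≠ 0 :=
        Finset.prod_ne_zero_iff.mpr fun ℓ hℓ => hne ℓ hℓ i hi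
      have hden : (∏ ℓ ∈ (Finset.Icc 1 k₂).erase i, (x i - x ℓ)) ≠ 0 := by
        refine Finset.prod_ne_zero_iff.mpr fun ℓ hℓ => sub_ne_zero.mpr fun h => ?_
        exact (Finset.mem_erase.mp hℓ).1 (hinj (Finset.mem_of_mem_erase hℓ) hi h.symm)
      field_simp
    · rw [if_neg him, if_neg him, mul_zero]
  refine ⟨hIint, ?_⟩
  exact aux_inf (Finset.Icc 1 k₂)
    (∫ r in Set.Ioi R, (deriv f r + c * f r / r) ^ 2 * r ^ ((N : ℝ) - 1))
    (fun i => 2 * (i : ℝ) - 2 - (ν : ℝ))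
    (fun i => ∫ r in Set.Ioi R, deriv (fun s => f s * s ^ c) r * r ^ (2 * (i : ℝ) - 2))
    (fun i j => R ^ (2 * (i : ℝ) + 2 * (j : ℝ) - 4 - (ν : ℝ)) /
      ((ν : ℝ) - 2 * (i : ℝ) - 2 * (j : ℝ) + 4))
    (fun i j => dtil i * dtil j * (R ^ ((ν : ℝ) - 2 * (i : ℝ) - 2 * (j : ℝ) + 4) /
      ((ν : ℝ) - 2 * (i : ℝ) - 2 * (j : ℝ) + 4)))
    (fun p => ∫ r in Set.Ioi R,
      (deriv (fun s => f s - ∑ i ∈ Finset.Icc 1 k₂, p i * s ^ (α + 2 * (i : ℝ) - 2)) r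
        + (c / r) *
          (f r - ∑ i ∈ Finset.Icc 1 k₂, p i * r ^ (α + 2 * (i : ℝ) - 2))) ^ 2 *
        r ^ ((N : ℝ) - 1))
    hlam hVfull hposq hsymS hkey
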